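/- Let d ≥ 1, τ > 0, ω > 0. Assume K, H : ℝ × ℝ^d × ℝ^d → ℝ^d are continuous and F̃, G̃ : ℝ^d × ℝ^d → ℝ^d are continuous. Let x : ℝ → ℝ^d be measurable and bounded, let y : ℝ → ℝ^d be differentiable, suppose x and y are ω-periodic, and suppose that for all t ∈ ℝ: x(t) = F̃( ∫_{−τ}^0 K(θ, x(t+θ), y(t+θ)) dθ, y(t) ) and y'(t) = G̃( ∫_{−τ}^0 H(θ, x(t+θ), y(t+θ)) dθ, y(t) ). Then x is continuous and y is continuously differentiable on ℝ. -/

import Mathlib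

open Real MeasureTheory intervalIntegral Filter Topology Set

lemma cont_aux (d : ℕ) (τ : ℝ) (hτ : 0 < τ)
    (K : ℝ × (Fin d → ℝ) × (Fin d → ℝ) → Fin d → ℝ) (hK : Continuous K)
    (x y : ℝ → Fin d → ℝ) (hxm : Measurable x) (C : ℝ) (hxb : ∀ t, ‖x t‖ ≤ C)
    (hyc : Continuous y) :
    Continuous (fun t => ∫ θ in (-τ)..0, K (θ, x (t + θ), y (t + θ))) := by
  have hmeas : ∀ t : ℝ, Measurable (fun s => K (s - t, x s, y s)) := fun t =>
    hK.measurable.comp ((measurable_id.sub_const t).prodMk (hxm.prodMk hyc.measurable))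
  have key : ∀ t : ℝ, (∫ θ in (-τ)..0, K (θ, x (t + θ), y (t + θ)))
      = ∫ s, (Set.Ioc (t - τ) t).indicator (fun s => K (s - t, x s, y s)) s := by
    intro t
    have h1 : (∫ θ in (-τ)..0, K (θ, x (t + θ), y (t + θ)))
        = ∫ θ in (-τ)..0, (fun s => K (s - t, x s, y s)) (θ + t) :=
      intervalIntegral.integral_congr (fun θ _ => by
        simp [add_sub_cancel_right, add_comm t θ])
    have h2 := intervalIntegral.integral_comp_add_right (a := -τ) (b := 0)
      (fun s => K (s - t, x s, y s)) t
    rw [h1, h2, show -τ + t = t - τ by ring,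
      show (0:ℝ) + t = t by ring, intervalIntegral.integral_of_le (by linarith),
      MeasureTheory.integral_indicator measurableSet_Ioc]
  rw [funext key, continuous_iff_continuousAt]
  intro t₀
  obtain ⟨D, hD⟩ := (isCompact_Icc (a := t₀ - τ - 1) (b := t₀ + 1)).exists_bound_of_continuousOn
    hyc.continuousOn
  have hC0 : 0 ≤ C := le_trans (norm_nonneg _) (hxb 0)
  have hD0 : 0 ≤ D := le_trans (norm_nonneg _) (hD t₀ ⟨by linarith, by linarith⟩)
  obtain ⟨M, hM⟩ := ((isCompact_Icc (a := -τ) (b := 0)).prod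
    ((isCompact_closedBall (0 : Fin d → ℝ) C).prod
      (isCompact_closedBall (0 : Fin d → ℝ) D))).exists_bound_of_continuousOn hK.continuousOn
  unfold ContinuousAt
  apply MeasureTheory.tendsto_integral_filter_of_dominated_convergence
    ((Set.Icc (t₀ - τ - 1) (t₀ + 1)).indicator (fun _ => max M 0))
  · filter_upwards with t
    exact ((hmeas t).indicator measurableSet_Ioc).aestronglyMeasurable
  · filter_upwards [Metric.ball_mem_nhds t₀ one_pos] with t ht
    rw [Metric.mem_ball, Real.dist_eq] at ht
    have habs := abs_lt.mp ht
    filter_upwards with s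
    by_cases hs : s ∈ Set.Ioc (t - τ) t
    · obtain ⟨hs1, hs2⟩ := hs
      have hsJ : s ∈ Set.Icc (t₀ - τ - 1) (t₀ + 1) := ⟨by linarith, by linarith⟩
      rw [Set.indicator_of_mem (show s ∈ Set.Ioc (t - τ) t from ⟨hs1, hs2⟩),
        Set.indicator_of_mem hsJ]
      refine le_trans (hM (s - t, x s, y s)
        ⟨⟨show -τ ≤ s - t by linarith, show s - t ≤ 0 by linarith⟩,
          mem_closedBall_zero_iff.mpr (hxb s), mem_closedBall_zero_iff.mpr (hD s hsJ)⟩)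
        (le_max_left _ _)
    · rw [Set.indicator_of_notMem hs, norm_zero]
      exact Set.indicator_nonneg (fun _ _ => le_max_right _ _) _
  · exact ((MeasureTheory.integrableOn_const_iff).mpr (Or.inr measure_Icc_lt_top)).integrable_indicator
      measurableSet_Icc
  · have h1 : ∀ᵐ s : ℝ, s ≠ t₀ - τ := by
      refine MeasureTheory.ae_iff.2 ?_
      simp only [ne_eq, not_not]
      simpa using measure_singleton (t₀ - τ)
    have h2 : ∀ᵐ s : ℝ, s ≠ t₀ := by
      refine MeasureTheory.ae_iff.2 ?_
      simp only [ne_eq, not_not]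
      simpa using measure_singleton t₀
    filter_upwards [h1, h2] with s hs1 hs2
    rcases lt_trichotomy s (t₀ - τ) with h | h | h
    · -- s strictly below: everything 0
      rw [Set.indicator_of_notMem (by simp only [Set.mem_Ioc, not_and]; intro h'; linarith)]
      refine tendsto_const_nhds.congr' ?_
      filter_upwards [eventually_gt_nhds (show s + τ < t₀ by linarith)] with t ht
      exact (Set.indicator_of_notMem (by simp only [Set.mem_Ioc, not_and]; intro h'; linarith) _).symm
    · exact absurd h hs1
    · rcases lt_or_gt_of_ne hs2 with h' | h'
      · -- interior case
        rw [Set.indicator_of_mem (show s ∈ Set.Ioc (t₀ - τ) t₀ from ⟨h, h'.le⟩)]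
        have hcont : Filter.Tendsto (fun t => K (s - t, x s, y s)) (𝓝 t₀)
            (𝓝 (K (s - t₀, x s, y s))) :=
          ((hK.comp ((continuous_const.sub continuous_id).prodMk continuous_const)).tendsto t₀)
        refine hcont.congr' ?_
        filter_upwards [eventually_lt_nhds (show t₀ < s + τ by linarith),
          eventually_gt_nhds h'] with t ht1 ht2
        exact (Set.indicator_of_mem (show s ∈ Set.Ioc (t - τ) t from ⟨by linarith, ht2.le⟩)
          (fun u => K (u - t, x u, y u))).symm
      · -- s strictly above
        rw [Set.indicator_of_notMem (by simp only [Set.mem_Ioc, not_and]; intro; linarith)]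
        refine tendsto_const_nhds.congr' ?_
        filter_upwards [eventually_lt_nhds h'] with t ht
        exact (Set.indicator_of_notMem (by simp only [Set.mem_Ioc, not_and]; intro; linarith) _).symm

/-- Basic regularity of periodic solutions of the coupled renewal/delay system:
if `K, H, F̃, G̃` are continuous and `(x, y)` is a bounded measurable /
differentiable `ω`-periodic solution of the coupled system, then `x` is
continuous and `y` is continuously differentiable. -/
theorem stmt8 (d : ℕ) (hd : 1 ≤ d)
    (τ ω : ℝ) (hτ : 0 < τ) (hω : 0 < ω)
    (K H : ℝ × (Fin d → ℝ) × (Fin d → ℝ) → Fin d → ℝ)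
    (hK : Continuous K) (hH : Continuous H)
    (Ftil Gtil : (Fin d → ℝ) × (Fin d → ℝ) → Fin d → ℝ)
    (hF : Continuous Ftil) (hG : Continuous Gtil)
    (x y : ℝ → Fin d → ℝ)
    (hxm : Measurable x) (C : ℝ) (hxb : ∀ t, ‖x t‖ ≤ C)
    (hyd : Differentiable ℝ y)
    (hxp : Function.Periodic x ω) (hyp : Function.Periodic y ω)
    (hxe : ∀ t : ℝ, x t = Ftil (∫ θ in (-τ)..0, K (θ, x (t + θ), y (t + θ)), y t))
    (hye : ∀ t : ℝ, deriv y t = Gtil (∫ θ in (-τ)..0, H (θ, x (t + θ), y (t + θ)), y t)) :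
    Continuous x ∧ ContDiff ℝ 1 y := by
  have hyc : Continuous y := hyd.continuous
  have hgK := cont_aux d τ hτ K hK x y hxm C hxb hyc
  have hgH := cont_aux d τ hτ H hH x y hxm C hxb hyc
  have hx : Continuous x :=
    ((hF.comp (hgK.prodMk hyc))).congr fun t => (hxe t).symm
  refine ⟨hx, contDiff_one_iff_deriv.mpr ⟨hyd, ?_⟩⟩
  exact ((hG.comp (hgH.prodMk hyc))).congr fun t => (hye t).symm
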